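/- Let m ≥ 2 be an even integer and let x_1, …, x_m be real numbers. Let A be the m×m skew-symmetric matrix with entries A_{ij} = x_i·(x_j − x_i) for i < j, A_{ji} = −A_{ij}, and A_{ii} = 0. Then det A = (x_1 · ∏_{i=2}^{m} (x_i − x_{i−1}))². -/

import Mathlib

set_option maxHeartbeats 1000000

namespace Stmt1Aux

open Matrix Finset

/-- Row-operation matrix: identity with `-1` on the subdiagonal. -/
def Emat (m : ℕ) : Matrix (Fin m) (Fin m) ℝ :=
  fun i k => (if i = k then 1 else 0) - (if (k : ℕ) + 1 = (i : ℕ) then 1 else 0)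

/-- Full sign matrix. -/
def Smat (m : ℕ) : Matrix (Fin m) (Fin m) ℝ :=
  fun i j => if (i : ℕ) < (j : ℕ) then 1 else if (j : ℕ) < (i : ℕ) then -1 else 0

/-- Skew tridiagonal matrix. -/
def Tmat (m : ℕ) : Matrix (Fin m) (Fin m) ℝ :=
  fun i j => if (i : ℕ) + 1 = (j : ℕ) then 1 else if (j : ℕ) + 1 = (i : ℕ) then -1 else 0

lemma det_Emat (m : ℕ) : (Emat m).det = 1 := by
  have h : (Emat m).BlockTriangular OrderDual.toDual := by
    intro i j hij
    have hlt : (i : ℕ) < (j : ℕ) := hij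
    simp only [Emat]
    rw [if_neg (fun h' => absurd (congrArg Fin.val h') (by omega)), if_neg (by omega)]
    ring
  rw [Matrix.det_of_lowerTriangular (Emat m) h]
  have hd : ∀ i : Fin m, Emat m i i = 1 := by
    intro i
    simp [Emat, show ¬((i : ℕ) + 1 = (i : ℕ)) from by omega]
  simp [hd]

lemma Emat_mul (m : ℕ) (g : ℕ → ℕ → ℝ) (M : Matrix (Fin m) (Fin m) ℝ)
    (hM : ∀ i j : Fin m, M i j = g i j) (i j : Fin m) :
    (Emat m * M) i j = g i j - (if 0 < (i : ℕ) then g ((i : ℕ) - 1) j else 0) := by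
  rw [Matrix.mul_apply]
  simp only [Emat, sub_mul, Finset.sum_sub_distrib]
  congr 1
  · rw [Finset.sum_eq_single i]
    · simp [hM]
    · intro k _ hk; rw [if_neg (fun h => hk h.symm), zero_mul]
    · simp
  · rcases Nat.eq_zero_or_pos (i : ℕ) with h | h
    · rw [if_neg (by omega)]
      apply Finset.sum_eq_zero
      intro k _
      rw [if_neg (by omega), zero_mul]
    · rw [if_pos h, Finset.sum_eq_single (⟨(i : ℕ) - 1, by omega⟩ : Fin m)]
      · rw [if_pos (show (i : ℕ) - 1 + 1 = (i : ℕ) by omega), one_mul, hM]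
      · intro k _ hk
        rw [if_neg, zero_mul]
        intro hc
        exact hk (Fin.ext (show (k : ℕ) = (i : ℕ) - 1 by omega))
      · simp

lemma mul_EmatT (m : ℕ) (g : ℕ → ℕ → ℝ) (M : Matrix (Fin m) (Fin m) ℝ)
    (hM : ∀ i j : Fin m, M i j = g i j) (i j : Fin m) :
    (M * (Emat m)ᵀ) i j = g i j - (if 0 < (j : ℕ) then g i ((j : ℕ) - 1) else 0) := by
  rw [Matrix.mul_apply]
  simp only [Matrix.transpose_apply, Emat, mul_sub, Finset.sum_sub_distrib]
  congr 1
  · rw [Finset.sum_eq_single j]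
    · simp [hM]
    · intro k _ hk; rw [if_neg (fun h => hk h.symm), mul_zero]
    · simp
  · rcases Nat.eq_zero_or_pos (j : ℕ) with h | h
    · rw [if_neg (by omega)]
      apply Finset.sum_eq_zero
      intro k _
      rw [if_neg (by omega), mul_zero]
    · rw [if_pos h, Finset.sum_eq_single (⟨(j : ℕ) - 1, by omega⟩ : Fin m)]
      · rw [if_pos (show (j : ℕ) - 1 + 1 = (j : ℕ) by omega), mul_one, hM]
      · intro k _ hk
        rw [if_neg, mul_zero]
        intro hc
        exact hk (Fin.ext (show (k : ℕ) = (j : ℕ) - 1 by omega))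
      · simp

/-- Conjugating the sign matrix by `Emat` yields `Tmat`. -/
lemma ESE (m : ℕ) : Emat m * Smat m * (Emat m)ᵀ = Tmat m := by
  set gS : ℕ → ℕ → ℝ := fun a b => if a < b then 1 else if b < a then -1 else 0 with hgS
  have h1 : ∀ i j : Fin m, (Emat m * Smat m) i j
      = gS i j - (if 0 < (i : ℕ) then gS ((i : ℕ) - 1) j else 0) :=
    Emat_mul m gS (Smat m) (fun i j => rfl)
  ext i j
  rw [mul_EmatT m (fun a b => gS a b - (if 0 < a then gS (a - 1) b else 0))
      (Emat m * Smat m) (fun i j => h1 i j) i j]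
  simp only [hgS, Tmat]
  rcases Nat.eq_zero_or_pos (i : ℕ) with hi | hi <;>
    rcases Nat.eq_zero_or_pos (j : ℕ) with hj | hj <;>
    simp only [hi, hj] <;>
    split_ifs <;> try contradiction
  all_goals try (exfalso; omega)
  all_goals ring1

lemma det_Tmat : ∀ m : ℕ, Even m → (Tmat m).det = 1 := by
  intro m
  induction m using Nat.strong_induction_on with
  | _ m ih =>
    match m with
    | 0 => intro _; exact Matrix.det_isEmpty
    | 1 => intro h; exact absurd h (by decide)
    | (n + 2) =>
      intro he
      have step : (Tmat (n + 2)).det = (Tmat n).det := by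
        rw [Matrix.det_succ_row_zero, Finset.sum_eq_single (1 : Fin (n + 2))]
        · have h01 : Tmat (n + 2) 0 1 = 1 := by
            simp [Tmat]
          rw [h01, Matrix.det_succ_column_zero, Finset.sum_eq_single (0 : Fin (n + 1))]
          · have hc0 : (1 : Fin (n + 2)).succAbove 0 = 0 := by
              rw [Fin.succAbove_of_castSucc_lt]
              · rfl
              · simp [Fin.lt_def]
            have hN0 : (Tmat (n + 2)).submatrix Fin.succ (1 : Fin (n + 2)).succAbove 0 0 = -1 := by
              simp [Matrix.submatrix_apply, hc0, Tmat]
            rw [hN0]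
            have hsub : ((Tmat (n + 2)).submatrix Fin.succ
                (1 : Fin (n + 2)).succAbove).submatrix (0 : Fin (n + 1)).succAbove Fin.succ
                = Tmat n := by
              ext a b
              have hr : (Fin.succ ((0 : Fin (n + 1)).succAbove a) : Fin (n + 2)).val = a.val + 2 := by
                simp [Fin.succAbove_zero]
              have hc : ((1 : Fin (n + 2)).succAbove (Fin.succ b)).val = b.val + 2 := by
                rw [Fin.succAbove_of_le_castSucc]
                · simp
                · simp [Fin.le_def]
              simp only [Matrix.submatrix_apply, Tmat, hr, hc]
              split_ifs <;> first | rfl | omega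
            rw [hsub]
            norm_num [Fin.val_one, Fin.val_zero]
          · intro i _ hi
            have : (Tmat (n + 2)).submatrix Fin.succ (1 : Fin (n + 2)).succAbove i 0 = 0 := by
              have hc0 : (1 : Fin (n + 2)).succAbove 0 = 0 := by
                rw [Fin.succAbove_of_castSucc_lt]
                · rfl
                · simp [Fin.lt_def]
              have hiv : (i : ℕ) ≠ 0 := fun h => hi (Fin.ext h)
              simp only [Matrix.submatrix_apply, hc0, Tmat, Fin.val_succ, Fin.val_zero]
              rw [if_neg (by omega), if_neg (by omega)]
            rw [this]; ring
          · simp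
        · intro j _ hj
          have : Tmat (n + 2) 0 j = 0 := by
            have hjv : (j : ℕ) ≠ 1 := fun h => hj (Fin.ext (by simp [h, Fin.val_one]))
            simp only [Tmat, Fin.val_zero]
            split_ifs <;> first | rfl | simp_all
          rw [this]; ring
        · simp
      have hn : Even n := by
        rcases he with ⟨k, hk⟩
        exact ⟨k - 1, by omega⟩
      rw [step, ih n (by omega) hn]

lemma det_Smat (m : ℕ) (hme : Even m) : (Smat m).det = 1 := by
  have h := congrArg Matrix.det (ESE m)
  rw [Matrix.det_mul, Matrix.det_mul, Matrix.det_transpose, det_Emat, det_Tmat m hme] at h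
  linarith [h]

end Stmt1Aux

open Stmt1Aux Matrix Finset in
/-- The determinant of the skew-symmetric Goldman bracket matrix
`A_{ij} = x_i (x_j - x_i)` (for `i < j`) is the square of its Pfaffian
`x_1 ∏_{i=2}^m (x_i - x_{i-1})`.  Indices of `x` are 1-based. -/
theorem stmt_1 (m : ℕ) (hm : 2 ≤ m) (hme : Even m) (x : ℕ → ℝ)
    (A : Matrix (Fin m) (Fin m) ℝ)
    (hA : ∀ i j : Fin m, A i j =
      if (i : ℕ) < (j : ℕ) then x ((i : ℕ) + 1) * (x ((j : ℕ) + 1) - x ((i : ℕ) + 1))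
      else if (j : ℕ) < (i : ℕ) then
        -(x ((j : ℕ) + 1) * (x ((i : ℕ) + 1) - x ((j : ℕ) + 1)))
      else 0) :
    A.det = (x 1 * ∏ i ∈ Finset.Icc 2 m, (x i - x (i - 1))) ^ 2 := by
  classical
  set g : ℕ → ℕ → ℝ := fun a b =>
    if a < b then x (a + 1) * (x (b + 1) - x (a + 1))
    else if b < a then -(x (b + 1) * (x (a + 1) - x (b + 1)))
    else 0 with hg
  set cc : ℕ → ℝ := fun a => if a = 0 then x 1 else x (a + 1) - x a with hcc
  set c : Fin m → ℝ := fun k => cc k with hc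
  -- Key conjugation identity
  have key : Emat m * A * (Emat m)ᵀ
      = Matrix.diagonal c * Smat m * Matrix.diagonal c := by
    have h1 : ∀ i j : Fin m, (Emat m * A) i j
        = g i j - (if 0 < (i : ℕ) then g ((i : ℕ) - 1) j else 0) :=
      Emat_mul m g A (fun i j => hA i j)
    ext i j
    rw [mul_EmatT m (fun a b => g a b - (if 0 < a then g (a - 1) b else 0))
        (Emat m * A) (fun i j => h1 i j) i j]
    have hrhs : (Matrix.diagonal c * Smat m * Matrix.diagonal c) i j
        = c i * Smat m i j * c j := by
      rw [Matrix.mul_diagonal, Matrix.diagonal_mul]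
    rw [hrhs]
    rcases Nat.eq_zero_or_pos (i : ℕ) with hi | hi <;>
      rcases Nat.eq_zero_or_pos (j : ℕ) with hj | hj
    · simp only [hg, hcc, hc, Smat, hi, hj]
      norm_num
    · have hj1 : (j : ℕ) - 1 + 1 = (j : ℕ) := by omega
      simp only [hg, hcc, hc, Smat, hi, hj1]
      split_ifs <;> try contradiction
      all_goals try (exfalso; omega)
      all_goals try ring1
      all_goals try (rw [show (j : ℕ) = (i : ℕ) from by omega]; ring1)
      all_goals try (rw [show (j : ℕ) = (i : ℕ) + 1 from by omega]; ring1)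
      all_goals try (rw [show (i : ℕ) = (j : ℕ) + 1 from by omega]; ring1)
      all_goals try (rw [show (j : ℕ) = 1 from by omega]; ring1)
      all_goals try (rw [show (i : ℕ) = 1 from by omega]; ring1)
    · have hi1 : (i : ℕ) - 1 + 1 = (i : ℕ) := by omega
      simp only [hg, hcc, hc, Smat, hj, hi1]
      split_ifs <;> try contradiction
      all_goals try (exfalso; omega)
      all_goals try ring1
      all_goals try (rw [show (j : ℕ) = (i : ℕ) from by omega]; ring1)
      all_goals try (rw [show (j : ℕ) = (i : ℕ) + 1 from by omega]; ring1)
      all_goals try (rw [show (i : ℕ) = (j : ℕ) + 1 from by omega]; ring1)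
      all_goals try (rw [show (j : ℕ) = 1 from by omega]; ring1)
      all_goals try (rw [show (i : ℕ) = 1 from by omega]; ring1)
    · have hi1 : (i : ℕ) - 1 + 1 = (i : ℕ) := by omega
      have hj1 : (j : ℕ) - 1 + 1 = (j : ℕ) := by omega
      simp only [hg, hcc, hc, Smat, hi1, hj1]
      split_ifs <;> try contradiction
      all_goals try (exfalso; omega)
      all_goals try ring1
      all_goals try (rw [show (j : ℕ) = (i : ℕ) from by omega]; ring1)
      all_goals try (rw [show (j : ℕ) = (i : ℕ) + 1 from by omega]; ring1)
      all_goals try (rw [show (i : ℕ) = (j : ℕ) + 1 from by omega]; ring1)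
      all_goals try (rw [show (j : ℕ) = 1 from by omega]; ring1)
      all_goals try (rw [show (i : ℕ) = 1 from by omega]; ring1)
  -- Take determinants
  have hdet := congrArg Matrix.det key
  rw [Matrix.det_mul, Matrix.det_mul, Matrix.det_transpose, det_Emat,
      Matrix.det_mul, Matrix.det_mul, Matrix.det_diagonal, det_Smat m hme] at hdet
  simp only [one_mul, mul_one] at hdet
  -- Compute the product of diagonal entries
  have hprod : (∏ k : Fin m, c k) = x 1 * ∏ i ∈ Finset.Icc 2 m, (x i - x (i - 1)) := by
    rw [hc]
    rw [Fin.prod_univ_eq_prod_range (fun a => cc a) m]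
    obtain ⟨n, rfl⟩ : ∃ n, m = n + 1 := ⟨m - 1, by omega⟩
    rw [Finset.prod_range_succ']
    have h0 : cc 0 = x 1 := by simp [hcc]
    have hIcc : ∏ i ∈ Finset.Icc 2 (n + 1), (x i - x (i - 1))
        = ∏ i ∈ Finset.range n, cc (i + 1) := by
      rw [← Finset.Ico_add_one_right_eq_Icc, Finset.prod_Ico_eq_prod_range]
      apply Finset.prod_congr (by congr 1)
      intro i _
      simp only [hcc]
      rw [if_neg (show ¬(i + 1 = 0) by omega)]
      rw [show 2 + i - 1 = i + 1 from by omega, show 2 + i = i + 1 + 1 from by omega]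
    rw [h0, hIcc]
    ring
  rw [hprod] at hdet
  rw [hdet]; ring
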